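/- Let G be a matching-covered graph and C a separating cut with cut-contractions G₁, G₂. If both G₁ and G₂ are Birkhoff–von Neumann graphs, then every facet of the polytope P(G;C) = P(G) ∩ {x : x(C) = 1} is exposed by a non-negativity inequality x_e ≥ 0; indeed P(G;C) is described by non-negativity inequalities, the degree equations x(δ(v)) = 1, and x(C) = 1. -/

import Mathlib

open Classical Finset

noncomputable section

namespace PaperPM

variable {V : Type} [Fintype V] [DecidableEq V]

/-- `M` is (the edge set of) a perfect matching of `G`. -/
def IsPM (G : SimpleGraph V) (M : Finset (Sym2 V)) : Prop :=
  (M : Set (Sym2 V)) ⊆ G.edgeSet ∧ ∀ v : V, ∃! e, e ∈ M ∧ v ∈ e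

/-- `G` is matching-covered: every edge lies in a perfect matching. -/
def MatchingCovered (G : SimpleGraph V) : Prop :=
  ∀ e ∈ G.edgeSet, ∃ M, IsPM G M ∧ e ∈ M

/-- incidence (indicator) vector of a set of edges -/
def indVec (M : Finset (Sym2 V)) : Sym2 V → ℝ := fun e => if e ∈ M then 1 else 0

/-- the perfect matching polytope of `G` -/
def pmPolytope (G : SimpleGraph V) : Set (Sym2 V → ℝ) :=
  convexHull ℝ {x | ∃ M, IsPM G M ∧ x = indVec M}

/-- the cut `δ(X)`: edges of `G` with exactly one endpoint in `X` -/
def cutE (G : SimpleGraph V) (X : Set V) : Finset (Sym2 V) :=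
  Finset.univ.filter fun e =>
    e ∈ G.edgeSet ∧ ∃ u v : V, e = s(u, v) ∧ u ∈ X ∧ v ∉ X

/-- `x(A) = Σ_{a ∈ A} x_a` -/
def edgeSum (x : Sym2 V → ℝ) (A : Finset (Sym2 V)) : ℝ := ∑ e ∈ A, x e

/-- the face `P(G;C) = P(G) ∩ {x : x(δ(X)) = 1}` -/
def faceCut (G : SimpleGraph V) (X : Set V) : Set (Sym2 V → ℝ) :=
  {x ∈ pmPolytope G | edgeSum x (cutE G X) = 1}

/-- `δ(X)` is a tight cut -/
def TightCut (G : SimpleGraph V) (X : Set V) : Prop :=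
  Odd X.toFinset.card ∧ 1 < X.toFinset.card ∧ X.toFinset.card < Fintype.card V - 1 ∧
    ∀ M, IsPM G M → (M ∩ cutE G X).card = 1

/-- a brick: non-bipartite matching-covered graph without tight cuts -/
def IsBrick (G : SimpleGraph V) : Prop :=
  MatchingCovered G ∧ ¬ G.Colorable 2 ∧ ∀ X : Set V, ¬ TightCut G X

/-- dimension of a subset of `ℝ^{Sym2 V}` (affine dimension; `-1` for the empty set) -/
def polyDim (s : Set (Sym2 V → ℝ)) : ℤ :=
  if s = ∅ then -1 else (Module.finrank ℝ (vectorSpan ℝ s) : ℤ)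

/-- number of bricks in a tight cut decomposition of `G`, via the dimension
formula `dim P(G) = |E| − |V| + 1 − b(G)` of Naddef and Edmonds–Pulleyblank–Lovász. -/
def brickCount (G : SimpleGraph V) : ℤ :=
  (G.edgeFinset.card : ℤ) - Fintype.card V + 1 - polyDim (pmPolytope G)

/-- (the edge set of) a perfect matching of the contraction `G/X`, viewed inside `G`:
no edge inside `X`, exactly one cut edge (covering the contraction vertex), and every
vertex outside `X` covered exactly once. This keeps multiple parallel cut edges distinct. -/
def IsPMContr (G : SimpleGraph V) (X : Set V) (M : Finset (Sym2 V)) : Prop :=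
  (M : Set (Sym2 V)) ⊆ G.edgeSet ∧ (∀ e ∈ M, ¬ ∀ v ∈ e, v ∈ X) ∧
    (M ∩ cutE G X).card = 1 ∧ ∀ v : V, v ∉ X → ∃! e, e ∈ M ∧ v ∈ e

/-- the contraction `G/X` is matching-covered (every one of its edges, i.e. every
edge of `G` not inside `X`, lies in a perfect matching of `G/X`). -/
def MatchingCoveredContr (G : SimpleGraph V) (X : Set V) : Prop :=
  ∀ e ∈ G.edgeSet, (¬ ∀ v ∈ e, v ∈ X) → ∃ M, IsPMContr G X M ∧ e ∈ M

/-- `δ(X)` is a separating cut: odd, nontrivial, and both cut-contractions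
`G/X` and `G/X̄` are matching-covered. -/
def SeparatingCut (G : SimpleGraph V) (X : Set V) : Prop :=
  Odd X.toFinset.card ∧ 1 < X.toFinset.card ∧ X.toFinset.card < Fintype.card V - 1 ∧
    MatchingCoveredContr G X ∧ MatchingCoveredContr G Xᶜ

/-- the edges of the contraction `G/X`, as edges of `G` -/
def contrEdges (G : SimpleGraph V) (X : Set V) : Finset (Sym2 V) :=
  G.edgeFinset.filter fun e => ¬ ∀ v ∈ e, v ∈ X

/-- the perfect matching polytope of the contraction `G/X`, in the coordinates of `G` -/
def contrPolytope (G : SimpleGraph V) (X : Set V) : Set (Sym2 V → ℝ) :=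
  convexHull ℝ {x | ∃ M, IsPMContr G X M ∧ x = indVec M}

/-- number of bricks of the contraction `G/X`, via the dimension formula -/
def brickCountContr (G : SimpleGraph V) (X : Set V) : ℤ :=
  (contrEdges G X).card - ((Fintype.card V - X.toFinset.card : ℕ) + 1) + 1 -
    polyDim (contrPolytope G X)

/-- the contraction `G/X` is a Birkhoff–von Neumann graph: its perfect matching
polytope is cut out by nonnegativity, the degree equations, and `x(δ(X)) = 1`. -/
def BvNContr (G : SimpleGraph V) (X : Set V) : Prop :=
  contrPolytope G X =
    {x | (∀ e, 0 ≤ x e) ∧ (∀ e : Sym2 V, (e ∉ G.edgeSet ∨ ∀ v ∈ e, v ∈ X) → x e = 0) ∧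
      (∀ v : V, v ∉ X → edgeSum x (cutE G {v}) = 1) ∧ edgeSum x (cutE G X) = 1}

/-- the contraction `G/X` is bipartite -/
def ContrBipartite (G : SimpleGraph V) (X : Set V) : Prop :=
  ∃ (c : V → Bool) (b : Bool), ∀ u v : V, G.Adj u v → (u ∉ X ∨ v ∉ X) →
    (if u ∈ X then b else c u) ≠ (if v ∈ X then b else c v)

/-- `G` is a Birkhoff–von Neumann graph -/
def BvN (G : SimpleGraph V) : Prop :=
  pmPolytope G =
    {x | (∀ e, 0 ≤ x e) ∧ (∀ e : Sym2 V, e ∉ G.edgeSet → x e = 0) ∧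
      ∀ v : V, edgeSum x (cutE G {v}) = 1}

/-- `F` is a face of the convex set `P` -/
def IsFaceOf {E : Type*} [AddCommGroup E] [Module ℝ E] (P F : Set E) : Prop :=
  F ⊆ P ∧ Convex ℝ F ∧ ∀ x ∈ P, ∀ y ∈ P, ∀ t : ℝ, 0 < t → t < 1 →
    t • x + (1 - t) • y ∈ F → x ∈ F ∧ y ∈ F

/-- a vector is integral if all its coordinates are integers -/
def Integral (x : Sym2 V → ℝ) : Prop := ∀ e, ∃ n : ℤ, x e = (n : ℝ)

/-- the Petersen graph, as the Kneser graph `K(5,2)` -/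
def petersenGraph : SimpleGraph {s : Finset (Fin 5) // s.card = 2} where
  Adj a b := Disjoint (a : Finset (Fin 5)) (b : Finset (Fin 5))
  symm := ⟨fun _ _ h => h.symm⟩
  loopless := ⟨fun a h => by
    have h0 : (a : Finset (Fin 5)) = ∅ := by
      exact disjoint_self.mp h
    have h2 := a.2
    rw [h0] at h2
    simp at h2⟩


set_option linter.unusedSectionVars false
section basics

variable {G : SimpleGraph V} {X : Set V}

lemma mem_cutE {e : Sym2 V} :
    e ∈ cutE G X ↔ e ∈ G.edgeSet ∧ ∃ u v : V, e = s(u, v) ∧ u ∈ X ∧ v ∉ X := by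
  simp [cutE]

lemma cutE_subset_edgeSet {e : Sym2 V} (h : e ∈ cutE G X) : e ∈ G.edgeSet :=
  (mem_cutE.1 h).1

lemma cutE_compl : cutE G Xᶜ = cutE G X := by
  ext e
  simp only [mem_cutE, Set.mem_compl_iff, not_not]
  constructor
  · rintro ⟨he, u, v, rfl, hu, hv⟩
    exact ⟨he, v, u, Sym2.eq_swap, hv, hu⟩
  · rintro ⟨he, u, v, rfl, hu, hv⟩
    exact ⟨he, v, u, Sym2.eq_swap, hv, hu⟩

lemma mem_cutE_singleton {v : V} {e : Sym2 V} :
    e ∈ cutE G {v} ↔ e ∈ G.edgeSet ∧ v ∈ e := by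
  constructor
  · rintro h
    obtain ⟨he, u, w, rfl, hu, -⟩ := mem_cutE.1 h
    rcases hu with rfl
    exact ⟨he, Sym2.mem_mk_left _ _⟩
  · rintro ⟨he, hv⟩
    obtain ⟨w, rfl⟩ := Sym2.mem_iff_exists.1 hv
    refine mem_cutE.2 ⟨he, v, w, rfl, rfl, ?_⟩
    have : G.Adj v w := he
    simpa using (this.ne).symm

lemma edgeSum_comb {x y : Sym2 V → ℝ} {a b : ℝ} {A : Finset (Sym2 V)} :
    edgeSum (a • x + b • y) A = a * edgeSum x A + b * edgeSum y A := by
  simp [edgeSum, Finset.sum_add_distrib, Finset.mul_sum]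

lemma edgeSum_indVec {M : Finset (Sym2 V)} {A : Finset (Sym2 V)} :
    edgeSum (indVec M) A = ((A ∩ M).card : ℝ) := by
  simp only [edgeSum, indVec, Finset.sum_boole, Finset.filter_mem_eq_inter]

end basics
section partA1

variable {G : SimpleGraph V} {X : Set V}

lemma pm_inter_singleton {M : Finset (Sym2 V)}
    (hsub : (M : Set (Sym2 V)) ⊆ G.edgeSet)
    (v : V) (e₀ : Sym2 V) (he₀ : (e₀ ∈ M ∧ v ∈ e₀) ∧ ∀ e, (e ∈ M ∧ v ∈ e) → e = e₀) :
    cutE G {v} ∩ M = {e₀} := by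
  ext e
  simp only [Finset.mem_inter, Finset.mem_singleton]
  constructor
  · rintro ⟨hc, hm⟩
    exact he₀.2 e ⟨hm, (mem_cutE_singleton.1 hc).2⟩
  · rintro rfl
    exact ⟨mem_cutE_singleton.2 ⟨hsub he₀.1.1, he₀.1.2⟩, he₀.1.1⟩

lemma pm_deg {M : Finset (Sym2 V)} (hM : IsPM G M) (v : V) :
    edgeSum (indVec M) (cutE G {v}) = 1 := by
  obtain ⟨e₀, he₀, hu⟩ := hM.2 v
  rw [edgeSum_indVec, pm_inter_singleton hM.1 v e₀ ⟨he₀, hu⟩]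
  simp

lemma degSet_convex :
    Convex ℝ {x : Sym2 V → ℝ | (∀ e, 0 ≤ x e) ∧ (∀ e : Sym2 V, e ∉ G.edgeSet → x e = 0) ∧
      ∀ v : V, edgeSum x (cutE G {v}) = 1} := by
  rintro x ⟨hx0, hxs, hxd⟩ y ⟨hy0, hys, hyd⟩ a b ha hb hab
  refine ⟨fun e => ?_, fun e he => ?_, fun v => ?_⟩
  · have : (a • x + b • y) e = a * x e + b * y e := by simp [mul_comm]
    rw [this]
    exact add_nonneg (mul_nonneg ha (hx0 e)) (mul_nonneg hb (hy0 e))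
  · have : (a • x + b • y) e = a * x e + b * y e := by simp [mul_comm]
    rw [this, hxs e he, hys e he]; ring
  · rw [edgeSum_comb, hxd v, hyd v, mul_one, mul_one, hab]

lemma pmPolytope_subset :
    pmPolytope G ⊆ {x : Sym2 V → ℝ | (∀ e, 0 ≤ x e) ∧ (∀ e : Sym2 V, e ∉ G.edgeSet → x e = 0) ∧
      ∀ v : V, edgeSum x (cutE G {v}) = 1} := by
  apply convexHull_min _ degSet_convex
  rintro x ⟨M, hM, rfl⟩
  refine ⟨fun e => ?_, fun e he => ?_, pm_deg hM⟩
  · simp only [indVec]; split <;> norm_num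
  · have : e ∉ M := fun h => he (hM.1 h)
    simp [indVec, this]

lemma faceCut_subset :
    faceCut G X ⊆ {x : Sym2 V → ℝ | (∀ e, 0 ≤ x e) ∧ (∀ e : Sym2 V, e ∉ G.edgeSet → x e = 0) ∧
      (∀ v : V, edgeSum x (cutE G {v}) = 1) ∧ edgeSum x (cutE G X) = 1} := by
  rintro x ⟨hx, hc⟩
  obtain ⟨h0, hs, hd⟩ := pmPolytope_subset hx
  exact ⟨h0, hs, hd, hc⟩

end partA1
section repr

lemma indVec_inj {M N : Finset (Sym2 V)} (h : indVec M = indVec N) : M = N := by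
  ext e
  have h' := congrFun h e
  simp only [indVec] at h'
  split_ifs at h' <;> simp_all

lemma collapse_sum {g : ℝ} {y : Sym2 V → ℝ} {M : Finset (Sym2 V)} (hzi : y = indVec M) :
    ∑ N : Finset (Sym2 V), (if y = indVec N then g else 0) = g := by
  rw [Finset.sum_eq_single_of_mem M (Finset.mem_univ M)]
  · simp [hzi]
  · intro N _ hNM
    rw [if_neg]
    intro h
    exact hNM (indVec_inj (hzi ▸ h)).symm

lemma collapse_sum_vec {g : Sym2 V → ℝ} {y : Sym2 V → ℝ} {M : Finset (Sym2 V)}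
    (hzi : y = indVec M) :
    ∑ N : Finset (Sym2 V), (if y = indVec N then g else 0) = g := by
  rw [Finset.sum_eq_single_of_mem M (Finset.mem_univ M)]
  · simp [hzi]
  · intro N _ hNM
    rw [if_neg]
    intro h
    exact hNM (indVec_inj (hzi ▸ h)).symm

lemma mem_convexHull_indVec {P : Finset (Sym2 V) → Prop} {x : Sym2 V → ℝ}
    (hx : x ∈ convexHull ℝ {y : Sym2 V → ℝ | ∃ M, P M ∧ y = indVec M}) :
    ∃ w : Finset (Sym2 V) → ℝ, (∀ M, 0 ≤ w M) ∧ (∀ M, w M ≠ 0 → P M) ∧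
      ∑ M : Finset (Sym2 V), w M = 1 ∧ x = ∑ M : Finset (Sym2 V), w M • indVec M := by
  rw [_root_.convexHull_eq] at hx
  obtain ⟨ι, t, wt, z, h0, h1, hz, hc⟩ := hx
  rw [Finset.centerMass_eq_of_sum_1 _ _ h1] at hc
  refine ⟨fun N => ∑ i ∈ t.filter (fun i => z i = indVec N), wt i, ?_, ?_, ?_, ?_⟩
  · intro N
    exact Finset.sum_nonneg fun i hi => h0 i (Finset.mem_of_mem_filter i hi)
  · intro N hN
    obtain ⟨i, hi, -⟩ := Finset.exists_ne_zero_of_sum_ne_zero hN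
    obtain ⟨hit, hzi⟩ := Finset.mem_filter.1 hi
    obtain ⟨M, hPM, hzM⟩ := hz i hit
    have hMN : M = N := indVec_inj (by rw [← hzM, hzi])
    rwa [← hMN]
  · rw [← h1]
    simp only [Finset.sum_filter]
    rw [Finset.sum_comm]
    refine Finset.sum_congr rfl fun i hi => ?_
    obtain ⟨M, hPM, hzM⟩ := hz i hi
    exact collapse_sum hzM
  · rw [← hc]
    have : ∀ N : Finset (Sym2 V),
        (∑ i ∈ t.filter (fun i => z i = indVec N), wt i) • indVec N
          = ∑ i ∈ t, (if z i = indVec N then wt i • z i else 0) := by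
      intro N
      rw [Finset.sum_smul, ← Finset.sum_filter]
      refine Finset.sum_congr rfl fun i hi => ?_
      rw [(Finset.mem_filter.1 hi).2]
    rw [Finset.sum_congr rfl fun N _ => this N, Finset.sum_comm]
    refine (Finset.sum_congr rfl fun i hi => ?_).symm
    obtain ⟨M, hPM, hzM⟩ := hz i hi
    exact collapse_sum_vec hzM

end repr
section merge

variable {G : SimpleGraph V} {X : Set V} {M N : Finset (Sym2 V)} {f : Sym2 V}

lemma mem_cut_of {e : Sym2 V} {v u : V} (hGe : e ∈ G.edgeSet) (hv : v ∈ e) (hvX : v ∈ X)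
    (hu : u ∈ e) (huX : u ∉ X) : e ∈ cutE G X := by
  have hne : v ≠ u := fun h => huX (h ▸ hvX)
  have he : e = s(v, u) := (Sym2.mem_and_mem_iff hne).1 ⟨hv, hu⟩
  exact mem_cutE.2 ⟨hGe, v, u, he, hvX, huX⟩

lemma not_all_imp {e : Sym2 V} {Y : Set V} (h : ¬ ∀ v ∈ e, v ∈ Y) : ∃ v ∈ e, v ∉ Y := by
  push_neg at h; exact h

lemma isPM_union (hM : IsPMContr G X M) (hN : IsPMContr G Xᶜ N)
    (hfM : M ∩ cutE G X = {f}) (hfN : N ∩ cutE G X = {f}) :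
    IsPM G (M ∪ N) := by
  have hfMm : f ∈ M := (Finset.mem_inter.1 (hfM ▸ Finset.mem_singleton_self f)).1
  have hfNm : f ∈ N := (Finset.mem_inter.1 (hfN ▸ Finset.mem_singleton_self f)).1
  constructor
  · rw [Finset.coe_union]
    exact Set.union_subset hM.1 hN.1
  · intro v
    by_cases hv : v ∈ X
    · obtain ⟨e₀, ⟨he₀N, hve₀⟩, hu⟩ := hN.2.2.2 v (by simp [hv])
      refine ⟨e₀, ⟨Finset.mem_union_right _ he₀N, hve₀⟩, ?_⟩
      rintro e ⟨heMN, hve⟩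
      rcases Finset.mem_union.1 heMN with heM | heN
      · obtain ⟨u, hue, huX⟩ := not_all_imp (hM.2.1 e heM)
        have heC : e ∈ cutE G X := mem_cut_of (hM.1 heM) hve hv hue huX
        have hef : e = f := Finset.mem_singleton.1 (hfM ▸ Finset.mem_inter.2 ⟨heM, heC⟩)
        have : f = e₀ := hu f ⟨hfNm, hef ▸ hve⟩
        rw [hef, this]
      · exact hu e ⟨heN, hve⟩
    · obtain ⟨e₀, ⟨he₀M, hve₀⟩, hu⟩ := hM.2.2.2 v hv
      refine ⟨e₀, ⟨Finset.mem_union_left _ he₀M, hve₀⟩, ?_⟩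
      rintro e ⟨heMN, hve⟩
      rcases Finset.mem_union.1 heMN with heM | heN
      · exact hu e ⟨heM, hve⟩
      · obtain ⟨u, hue, huX⟩ := not_all_imp (hN.2.1 e heN)
        rw [Set.notMem_compl_iff] at huX
        have heC : e ∈ cutE G X := mem_cut_of (hN.1 heN) hue huX hve hv
        have hef : e = f := Finset.mem_singleton.1 (hfN ▸ Finset.mem_inter.2 ⟨heN, heC⟩)
        have : f = e₀ := hu f ⟨hfMm, hef ▸ hve⟩
        rw [hef, this]

lemma inter_eq_cut_singleton (hM : IsPMContr G X M) (hN : IsPMContr G Xᶜ N)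
    (hfM : M ∩ cutE G X = {f}) (hfN : N ∩ cutE G X = {f}) :
    M ∩ N = {f} := by
  have hfMm : f ∈ M := (Finset.mem_inter.1 (hfM ▸ Finset.mem_singleton_self f)).1
  have hfNm : f ∈ N := (Finset.mem_inter.1 (hfN ▸ Finset.mem_singleton_self f)).1
  ext e
  simp only [Finset.mem_inter, Finset.mem_singleton]
  constructor
  · rintro ⟨heM, heN⟩
    obtain ⟨u, hue, huX⟩ := not_all_imp (hM.2.1 e heM)
    obtain ⟨u', hu'e, hu'X⟩ := not_all_imp (hN.2.1 e heN)
    rw [Set.notMem_compl_iff] at hu'X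
    have heC : e ∈ cutE G X := mem_cut_of (hM.1 heM) hu'e hu'X hue huX
    exact Finset.mem_singleton.1 (hfM ▸ Finset.mem_inter.2 ⟨heM, heC⟩)
  · rintro rfl
    exact ⟨hfMm, hfNm⟩

lemma indVec_union (hMN : M ∩ N = {f}) :
    indVec (M ∪ N) = indVec M + indVec N - indVec {f} := by
  have h' : f ∈ M ∩ N := hMN ▸ Finset.mem_singleton_self f
  have hfM : f ∈ M := (Finset.mem_inter.1 h').1
  have hfN : f ∈ N := (Finset.mem_inter.1 h').2
  funext e
  simp only [indVec, Pi.add_apply, Pi.sub_apply, Finset.mem_union, Finset.mem_singleton]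
  by_cases heM : e ∈ M <;> by_cases heN : e ∈ N
  · have hef : e = f := Finset.mem_singleton.1 (hMN ▸ Finset.mem_inter.2 ⟨heM, heN⟩)
    simp [hef, hfM, hfN]
  · have hef : e ≠ f := fun h => heN (h ▸ hfN)
    simp [heM, heN, hef]
  · have hef : e ≠ f := fun h => heM (h ▸ hfM)
    simp [heM, heN, hef]
  · have hef : e ≠ f := fun h => heM (h ▸ hfM)
    simp [heM, heN, hef]

end merge
section splice

variable {G : SimpleGraph V} {X : Set V}

lemma cut_singleton_of_mem {M C : Finset (Sym2 V)} {f : Sym2 V}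
    (hcard : (M ∩ C).card = 1) (hfM : f ∈ M) (hfC : f ∈ C) : M ∩ C = {f} := by
  obtain ⟨a, ha⟩ := Finset.card_eq_one.1 hcard
  have : f ∈ M ∩ C := Finset.mem_inter.2 ⟨hfM, hfC⟩
  rw [ha] at this ⊢
  rw [Finset.mem_singleton.1 this]

lemma regroup {α : Type} [AddCommMonoid α] (C : Finset (Sym2 V)) (w : Finset (Sym2 V) → ℝ)
    (hw : ∀ M, w M ≠ 0 → (M ∩ C).card = 1) (g : Finset (Sym2 V) → α) :
    ∑ f ∈ C, ∑ M ∈ Finset.univ.filter (fun M => w M ≠ 0 ∧ M ∩ C = {f}), g M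
      = ∑ M ∈ Finset.univ.filter (fun M => w M ≠ 0), g M := by
  simp only [Finset.sum_filter]
  rw [Finset.sum_comm]
  refine Finset.sum_congr rfl fun M _ => ?_
  by_cases hwM : w M = 0
  · simp [hwM]
  · obtain ⟨a, ha⟩ := Finset.card_eq_one.1 (hw M hwM)
    have haC : a ∈ C := Finset.inter_subset_right (ha ▸ Finset.mem_singleton_self a)
    rw [if_pos hwM, Finset.sum_eq_single_of_mem a haC]
    · simp [hwM, ha]
    · intro f hfC hfa
      rw [if_neg]
      rintro ⟨-, h⟩
      exact hfa (by rw [ha] at h; exact (Finset.singleton_inj.1 h).symm)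

lemma filter_empty_of_sum_zero {C : Finset (Sym2 V)} {w : Finset (Sym2 V) → ℝ} {f : Sym2 V}
    (hw0 : ∀ M, 0 ≤ w M)
    (hsum : ∑ M ∈ Finset.univ.filter (fun M => w M ≠ 0 ∧ M ∩ C = {f}), w M = 0) :
    Finset.univ.filter (fun M : Finset (Sym2 V) => w M ≠ 0 ∧ M ∩ C = {f}) = ∅ := by
  by_contra h
  obtain ⟨M, hM⟩ := Finset.nonempty_of_ne_empty h
  have := (Finset.sum_eq_zero_iff_of_nonneg fun N _ => hw0 N).1 hsum M hM
  exact (Finset.mem_filter.1 hM).2.1 this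

lemma mem_faceCut_of (hBvN1 : BvNContr G Xᶜ) (hBvN2 : BvNContr G X) {x : Sym2 V → ℝ}
    (h0 : ∀ e, 0 ≤ x e) (hs : ∀ e : Sym2 V, e ∉ G.edgeSet → x e = 0)
    (hd : ∀ v : V, edgeSum x (cutE G {v}) = 1) (hcut : edgeSum x (cutE G X) = 1) :
    x ∈ faceCut G X := by
  set C := cutE G X with hCdef
  set x₁ : Sym2 V → ℝ := fun e => if (∀ v ∈ e, v ∈ X) then 0 else x e with hx₁def
  set x₂ : Sym2 V → ℝ := fun e => if (∀ v ∈ e, v ∈ Xᶜ) then 0 else x e with hx₂def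
  have hx₁C : ∀ e ∈ C, x₁ e = x e := by
    intro e he
    obtain ⟨hGe, u, v, rfl, huX, hvX⟩ := mem_cutE.1 he
    exact if_neg fun hall => hvX (hall v (Sym2.mem_mk_right u v))
  have hx₂C : ∀ e ∈ C, x₂ e = x e := by
    intro e he
    obtain ⟨hGe, u, v, rfl, huX, hvX⟩ := mem_cutE.1 he
    exact if_neg fun hall => (hall u (Sym2.mem_mk_left u v)) huX
  have hx₁mem : x₁ ∈ contrPolytope G X := by
    rw [hBvN2]
    refine ⟨fun e => ?_, fun e he => ?_, fun v hv => ?_, ?_⟩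
    · simp only [hx₁def]; split
      · exact le_refl 0
      · exact h0 e
    · rcases he with he | he
      · simp only [hx₁def]; split
        · rfl
        · exact hs e he
      · exact if_pos he
    · rw [show edgeSum x₁ (cutE G {v}) = edgeSum x (cutE G {v}) from
        Finset.sum_congr rfl fun e he => if_neg fun hall =>
          hv (hall v (mem_cutE_singleton.1 he).2)]
      exact hd v
    · rw [show edgeSum x₁ (cutE G X) = edgeSum x (cutE G X) from
        Finset.sum_congr rfl fun e he => hx₁C e he]
      exact hcut
  have hx₂mem : x₂ ∈ contrPolytope G Xᶜ := by
    rw [hBvN1]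
    refine ⟨fun e => ?_, fun e he => ?_, fun v hv => ?_, ?_⟩
    · simp only [hx₂def]; split
      · exact le_refl 0
      · exact h0 e
    · rcases he with he | he
      · simp only [hx₂def]; split
        · rfl
        · exact hs e he
      · exact if_pos he
    · rw [show edgeSum x₂ (cutE G {v}) = edgeSum x (cutE G {v}) from
        Finset.sum_congr rfl fun e he => if_neg fun hall =>
          hv (hall v (mem_cutE_singleton.1 he).2)]
      exact hd v
    · rw [cutE_compl, show edgeSum x₂ (cutE G X) = edgeSum x (cutE G X) from
        Finset.sum_congr rfl fun e he => hx₂C e he]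
      exact hcut
  obtain ⟨w₁, hw₁0, hw₁P, hw₁s, hx₁eq⟩ := mem_convexHull_indVec hx₁mem
  obtain ⟨w₂, hw₂0, hw₂P, hw₂s, hx₂eq⟩ := mem_convexHull_indVec hx₂mem
  have hw₁card : ∀ M, w₁ M ≠ 0 → (M ∩ C).card = 1 := fun M hM => (hw₁P M hM).2.2.1
  have hw₂card : ∀ N, w₂ N ≠ 0 → (N ∩ C).card = 1 := by
    intro N hN
    rw [hCdef, ← cutE_compl]
    exact (hw₂P N hN).2.2.1
  set A : Sym2 V → Finset (Finset (Sym2 V)) :=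
    fun f => Finset.univ.filter (fun M => w₁ M ≠ 0 ∧ M ∩ C = {f}) with hAdef
  set B : Sym2 V → Finset (Finset (Sym2 V)) :=
    fun f => Finset.univ.filter (fun N => w₂ N ≠ 0 ∧ N ∩ C = {f}) with hBdef
  have heval : ∀ (w : Finset (Sym2 V) → ℝ) (y : Sym2 V → ℝ),
      (∀ M, w M ≠ 0 → (M ∩ C).card = 1) →
      y = ∑ M : Finset (Sym2 V), w M • indVec M →
      ∀ f ∈ C, ∑ M ∈ Finset.univ.filter (fun M => w M ≠ 0 ∧ M ∩ C = {f}), w M = y f := by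
    intro w y hwc hyeq f hf
    have hy : y f = ∑ M : Finset (Sym2 V), w M * indVec M f := by
      rw [hyeq]; simp [Finset.sum_apply]
    rw [hy, Finset.sum_filter]
    refine Finset.sum_congr rfl fun M _ => ?_
    by_cases hwM : w M = 0
    · simp [hwM]
    · by_cases hfM : f ∈ M
      · rw [if_pos ⟨hwM, cut_singleton_of_mem (hwc M hwM) hfM hf⟩]
        simp [indVec, hfM]
      · rw [if_neg, indVec, if_neg hfM, mul_zero]
        rintro ⟨-, hMC⟩
        exact hfM (Finset.mem_inter.1 (hMC ▸ Finset.mem_singleton_self f)).1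
  have hA : ∀ f ∈ C, ∑ M ∈ A f, w₁ M = x f := by
    intro f hf
    rw [heval w₁ x₁ hw₁card hx₁eq f hf]
    exact hx₁C f hf
  have hB : ∀ f ∈ C, ∑ N ∈ B f, w₂ N = x f := by
    intro f hf
    rw [heval w₂ x₂ hw₂card hx₂eq f hf]
    exact hx₂C f hf
  have hscal : ∀ f ∈ C, ∑ M ∈ A f, ∑ N ∈ B f, w₁ M * w₂ N / x f = x f := by
    intro f hf
    calc ∑ M ∈ A f, ∑ N ∈ B f, w₁ M * w₂ N / x f
        = (∑ M ∈ A f, w₁ M) * (∑ N ∈ B f, w₂ N) / x f := by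
          rw [Finset.sum_mul_sum, Finset.sum_div]
          exact Finset.sum_congr rfl fun M _ => (Finset.sum_div _ _ _).symm
      _ = x f * x f / x f := by rw [hA f hf, hB f hf]
      _ = x f := mul_self_div_self _
  have hunion : ∀ f ∈ C, ∀ M ∈ A f, ∀ N ∈ B f,
      IsPM G (M ∪ N) ∧ M ∩ N = {f} := by
    intro f hf M hM N hN
    obtain ⟨-, hMw, hMC⟩ := Finset.mem_filter.1 hM
    obtain ⟨-, hNw, hNC⟩ := Finset.mem_filter.1 hN
    have hM' := hw₁P M hMw
    have hN' := hw₂P N hNw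
    exact ⟨isPM_union hM' hN' hMC hNC, inter_eq_cut_singleton hM' hN' hMC hNC⟩
  set T : Finset ((_ : Sym2 V) × Finset (Sym2 V) × Finset (Sym2 V)) :=
    C.sigma (fun f => (A f) ×ˢ (B f)) with hTdef
  set ν : ((_ : Sym2 V) × Finset (Sym2 V) × Finset (Sym2 V)) → ℝ :=
    fun p => w₁ p.2.1 * w₂ p.2.2 / x p.1 with hνdef
  have hTmem : ∀ p ∈ T, p.1 ∈ C ∧ p.2.1 ∈ A p.1 ∧ p.2.2 ∈ B p.1 := by
    intro p hp
    obtain ⟨h1, h2⟩ := Finset.mem_sigma.1 hp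
    obtain ⟨h3, h4⟩ := Finset.mem_product.1 h2
    exact ⟨h1, h3, h4⟩
  have hνsum : ∑ p ∈ T, ν p = 1 := by
    rw [hTdef, Finset.sum_sigma]
    have hsp : ∀ f ∈ C, ∑ q ∈ (A f) ×ˢ (B f), ν ⟨f, q⟩ = x f := by
      intro f hf
      rw [Finset.sum_product]
      exact hscal f hf
    rw [Finset.sum_congr rfl hsp]
    exact hcut
  have hrepr : ∑ p ∈ T, ν p • indVec (p.2.1 ∪ p.2.2) = x := by
    rw [hTdef, Finset.sum_sigma]
    have key : ∀ f ∈ C, (∑ q ∈ (A f) ×ˢ (B f), ν ⟨f, q⟩ • indVec (q.1 ∪ q.2))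
        = (∑ M ∈ A f, w₁ M • indVec M) + (∑ N ∈ B f, w₂ N • indVec N) - x f • indVec {f} := by
      intro f hf
      by_cases hxf : x f = 0
      · have hAe : A f = ∅ := by
          apply filter_empty_of_sum_zero hw₁0
          show ∑ M ∈ A f, w₁ M = 0
          rw [hA f hf, hxf]
        have hBe : B f = ∅ := by
          apply filter_empty_of_sum_zero hw₂0
          show ∑ N ∈ B f, w₂ N = 0
          rw [hB f hf, hxf]
        simp [hAe, hBe, hxf]
      · rw [Finset.sum_product]
        have step1 : ∀ M ∈ A f, ∀ N ∈ B f, ν ⟨f, (M, N)⟩ • indVec (M ∪ N)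
            = (w₁ M * w₂ N / x f) • indVec M + (w₁ M * w₂ N / x f) • indVec N
              - (w₁ M * w₂ N / x f) • indVec {f} := by
          intro M hM N hN
          rw [show ν ⟨f, (M, N)⟩ = w₁ M * w₂ N / x f from rfl,
            indVec_union (hunion f hf M hM N hN).2, smul_sub, smul_add]
        calc ∑ M ∈ A f, ∑ N ∈ B f, ν ⟨f, (M, N)⟩ • indVec (M ∪ N)
            = ∑ M ∈ A f, ∑ N ∈ B f, ((w₁ M * w₂ N / x f) • indVec M
                + (w₁ M * w₂ N / x f) • indVec N - (w₁ M * w₂ N / x f) • indVec {f}) :=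
              Finset.sum_congr rfl fun M hM => Finset.sum_congr rfl fun N hN => step1 M hM N hN
          _ = (∑ M ∈ A f, ∑ N ∈ B f, (w₁ M * w₂ N / x f) • indVec M)
                + (∑ M ∈ A f, ∑ N ∈ B f, (w₁ M * w₂ N / x f) • indVec N)
                - ∑ M ∈ A f, ∑ N ∈ B f, (w₁ M * w₂ N / x f) • indVec {f} := by
              simp [Finset.sum_add_distrib, Finset.sum_sub_distrib]
          _ = (∑ M ∈ A f, w₁ M • indVec M) + (∑ N ∈ B f, w₂ N • indVec N)
                - x f • indVec {f} := by
              congr 1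
              · congr 1
                · refine Finset.sum_congr rfl fun M hM => ?_
                  rw [← Finset.sum_smul, ← Finset.sum_div, ← Finset.mul_sum, hB f hf,
                    mul_div_assoc, div_self hxf, mul_one]
                · rw [Finset.sum_comm]
                  refine Finset.sum_congr rfl fun N hN => ?_
                  rw [← Finset.sum_smul, ← Finset.sum_div, ← Finset.sum_mul, hA f hf,
                    mul_comm, mul_div_assoc, div_self hxf, mul_one]
              · rw [show (∑ M ∈ A f, ∑ N ∈ B f, (w₁ M * w₂ N / x f) • indVec ({f} : Finset (Sym2 V)))
                    = (∑ M ∈ A f, ∑ N ∈ B f, w₁ M * w₂ N / x f) • indVec {f} from by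
                      rw [Finset.sum_smul]
                      exact Finset.sum_congr rfl fun M _ => (Finset.sum_smul).symm,
                  hscal f hf]
    rw [Finset.sum_congr rfl key, Finset.sum_sub_distrib, Finset.sum_add_distrib]
    simp only [hAdef, hBdef]
    rw [regroup C w₁ hw₁card (fun M => w₁ M • indVec M),
      regroup C w₂ hw₂card (fun N => w₂ N • indVec N)]
    have hfill : ∀ (w : Finset (Sym2 V) → ℝ),
        ∑ M ∈ Finset.univ.filter (fun M => w M ≠ 0), w M • indVec M
          = ∑ M : Finset (Sym2 V), w M • indVec M := by
      intro w
      apply Finset.sum_subset (Finset.subset_univ _)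
      intro M _ hM
      have hw : w M = 0 := by
        by_contra h
        exact hM (Finset.mem_filter.2 ⟨Finset.mem_univ M, h⟩)
      rw [hw, zero_smul]
    rw [hfill w₁, hfill w₂, ← hx₁eq, ← hx₂eq]
    -- now: x₁ + x₂ - ∑ f ∈ C, x f • indVec {f} = x
    funext e
    simp only [Pi.add_apply, Pi.sub_apply, Finset.sum_apply, Pi.smul_apply, smul_eq_mul]
    have hxC : ∑ f ∈ C, x f * indVec {f} e = if e ∈ C then x e else 0 := by
      rw [Finset.sum_congr rfl (fun f _ => show x f * indVec {f} e
          = if e = f then x f else 0 from by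
        simp only [indVec, Finset.mem_singleton, mul_ite, mul_one, mul_zero])]
      exact Finset.sum_ite_eq C e x
    rw [hxC]
    by_cases heC : e ∈ C
    · rw [if_pos heC, hx₁C e heC, hx₂C e heC]
      ring
    · rw [if_neg heC, sub_zero]
      by_cases hallX : ∀ v ∈ e, v ∈ X
      · have h1 : x₁ e = 0 := if_pos hallX
        have h2 : x₂ e = x e := if_neg fun hall =>
          (hall e.out.1 (Sym2.out_fst_mem e)) (hallX e.out.1 (Sym2.out_fst_mem e))
        rw [h1, h2, zero_add]
      · by_cases hallXc : ∀ v ∈ e, v ∈ Xᶜ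
        · have h2 : x₂ e = 0 := if_pos hallXc
          have h1 : x₁ e = x e := if_neg fun hall =>
            (hallXc e.out.1 (Sym2.out_fst_mem e)) (hall e.out.1 (Sym2.out_fst_mem e))
          rw [h1, h2, add_zero]
        · obtain ⟨a, hae, haX⟩ := not_all_imp hallX
          obtain ⟨b, hbe, hbX⟩ := not_all_imp hallXc
          rw [Set.notMem_compl_iff] at hbX
          have hx0 : x e = 0 := by
            by_cases hGe : e ∈ G.edgeSet
            · exact absurd (mem_cut_of hGe hbe hbX hae haX) heC
            · exact hs e hGe
          have h1 : x₁ e = x e := if_neg hallX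
          have h2 : x₂ e = x e := if_neg hallXc
          rw [h1, h2, hx0]
          ring
  refine ⟨?_, hcut⟩
  show x ∈ pmPolytope G
  rw [← hrepr, pmPolytope]
  refine Convex.sum_mem (convex_convexHull ℝ _) (fun p hp => ?_) hνsum (fun p hp => ?_)
  · obtain ⟨hpC, hpA, hpB⟩ := hTmem p hp
    have h0f := h0 p.1
    obtain ⟨-, hMw, -⟩ := Finset.mem_filter.1 hpA
    obtain ⟨-, hNw, -⟩ := Finset.mem_filter.1 hpB
    exact div_nonneg (mul_nonneg (hw₁0 _) (hw₂0 _)) h0f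
  · obtain ⟨hpC, hpA, hpB⟩ := hTmem p hp
    exact subset_convexHull ℝ _ ⟨p.2.1 ∪ p.2.2, (hunion p.1 hpC p.2.1 hpA p.2.2 hpB).1, rfl⟩

end splice
section partB

lemma interior_point {F : Set (Sym2 V → ℝ)} (hconv : Convex ℝ F) (hne : F.Nonempty) :
    ∃ z ∈ F, ∀ y ∈ (affineSpan ℝ F : Set (Sym2 V → ℝ)), ∃ u ∈ F, ∃ t : ℝ,
      0 < t ∧ t < 1 ∧ z = t • u + (1 - t) • y := by
  obtain ⟨tset, htsub, htspan, htind⟩ := exists_affineIndependent ℝ (Sym2 V → ℝ) F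
  have htfin : tset.Finite := finite_set_of_fin_dim_affineIndependent ℝ htind
  haveI : Fintype ↥tset := htfin.fintype
  have htne : tset.Nonempty := by
    rcases Set.eq_empty_or_nonempty tset with h | h
    · exfalso
      obtain ⟨p, hp⟩ := hne
      have hmem : p ∈ affineSpan ℝ F := subset_affineSpan ℝ F hp
      rw [← htspan, h] at hmem
      exact AffineSubspace.notMem_bot ℝ (Sym2 V → ℝ) p (by simpa using hmem)
    · exact h
  haveI : Nonempty ↥tset := htne.to_subtype
  set n : ℕ := Fintype.card ↥tset with hn
  have hn0 : 0 < n := Fintype.card_pos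
  have hnR : (0:ℝ) < n := by exact_mod_cast hn0
  set z : Sym2 V → ℝ := ∑ i : ↥tset, (n : ℝ)⁻¹ • (i : Sym2 V → ℝ) with hzdef
  have hzsum : ∑ _i : ↥tset, (n:ℝ)⁻¹ = 1 := by
    rw [Finset.sum_const, Finset.card_univ, nsmul_eq_mul]
    field_simp
    rfl
  have hzF : z ∈ F :=
    hconv.sum_mem (fun i _ => by positivity) hzsum (fun i _ => htsub i.2)
  refine ⟨z, hzF, ?_⟩
  intro y hy
  have hy' : y ∈ affineSpan ℝ (Set.range ((↑) : ↥tset → (Sym2 V → ℝ))) := by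
    rw [Subtype.range_coe, htspan]
    exact hy
  obtain ⟨c, hc1, hcy⟩ := eq_affineCombination_of_mem_affineSpan_of_fintype hy'
  have hyc : y = ∑ i : ↥tset, c i • (i : Sym2 V → ℝ) := by
    rw [hcy, Finset.univ.affineCombination_eq_linear_combination _ _ hc1]
  set K : ℝ := ∑ i : ↥tset, |c i| with hK
  have hK0 : 0 ≤ K := Finset.sum_nonneg fun i _ => abs_nonneg _
  set ε : ℝ := 1 / (n * (1 + K)) with hε
  have hε0 : 0 < ε := by positivity
  have hεK : ε * (1 + K) = 1 / n := by
    rw [hε]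
    field_simp
  have hcoeff : ∀ i : ↥tset, 0 ≤ (1 + ε)/n - ε * c i := by
    intro i
    have h1 : ε * c i ≤ ε * |c i| := mul_le_mul_of_nonneg_left (le_abs_self _) hε0.le
    have h2 : |c i| ≤ 1 + K := by
      have := Finset.single_le_sum (fun j (_ : j ∈ Finset.univ) => abs_nonneg (c j))
        (Finset.mem_univ i)
      rw [← hK] at this
      linarith
    have h3 : ε * |c i| ≤ ε * (1 + K) := mul_le_mul_of_nonneg_left h2 hε0.le
    have h5 : (1:ℝ)/n ≤ (1+ε)/n := by gcongr; linarith
    have h6 : ε * c i ≤ (1+ε)/n := by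
      calc ε * c i ≤ ε * (1 + K) := le_trans h1 h3
        _ = 1/n := hεK
        _ ≤ (1+ε)/n := h5
    linarith
  have husum : ∑ i : ↥tset, ((1 + ε)/n - ε * c i) = 1 := by
    rw [Finset.sum_sub_distrib, ← Finset.mul_sum, hc1, Finset.sum_const, Finset.card_univ,
      nsmul_eq_mul, mul_one]
    rw [← hn]
    field_simp
    ring
  have huF : (∑ i : ↥tset, ((1 + ε)/n - ε * c i) • (i : Sym2 V → ℝ)) ∈ F :=
    hconv.sum_mem (fun i _ => hcoeff i) husum (fun i _ => htsub i.2)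
  refine ⟨_, huF, 1/(1+ε), by positivity, ?_, ?_⟩
  · rw [div_lt_one (by linarith)]
    linarith
  · rw [hyc, Finset.smul_sum, Finset.smul_sum, ← Finset.sum_add_distrib, hzdef]
    refine Finset.sum_congr rfl fun i _ => ?_
    rw [smul_smul, smul_smul, ← add_smul]
    congr 1
    have hne1 : (1:ℝ) + ε ≠ 0 := by positivity
    have hnne : (n:ℝ) ≠ 0 := ne_of_gt hnR
    field_simp
    ring

lemma eq_singleton_of_finrank_zero {Q : Set (Sym2 V → ℝ)} (hne : Q.Nonempty)
    (h : Module.finrank ℝ (vectorSpan ℝ Q) = 0) : ∃ p, Q = {p} := by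
  obtain ⟨p, hp⟩ := hne
  refine ⟨p, Set.eq_singleton_iff_unique_mem.2 ⟨hp, fun q hq => ?_⟩⟩
  have hbot : vectorSpan ℝ Q = ⊥ := Submodule.finrank_eq_zero.1 h
  have hv : q -ᵥ p ∈ vectorSpan ℝ Q := vsub_mem_vectorSpan ℝ hq hp
  rw [hbot, Submodule.mem_bot] at hv
  have : q - p = 0 := hv
  exact sub_eq_zero.1 this

lemma exists_pos_on_cut {G : SimpleGraph V} {X : Set V} {p : Sym2 V → ℝ}
    (h0 : ∀ e, 0 ≤ p e) (hc : edgeSum p (cutE G X) = 1) :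
    ∃ e ∈ cutE G X, 0 < p e := by
  by_contra h
  push_neg at h
  have : edgeSum p (cutE G X) = 0 :=
    Finset.sum_eq_zero fun e he => le_antisymm (h e he) (h0 e)
  rw [this] at hc
  norm_num at hc

end partB
/-- if both cut-contractions of `G` along a separating cut `C = δ(X)`
are Birkhoff–von Neumann, then `P(G;C)` is described by nonnegativity, the degree
equations and `x(C) = 1`; in particular every facet of `P(G;C)` is exposed by a
non-negativity inequality. -/
theorem stmt10 (G : SimpleGraph V) (hG : MatchingCovered G) (X : Set V)
    (hsep : SeparatingCut G X)
    (hBvN1 : BvNContr G Xᶜ) (hBvN2 : BvNContr G X) :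
    faceCut G X =
      {x | (∀ e, 0 ≤ x e) ∧ (∀ e : Sym2 V, e ∉ G.edgeSet → x e = 0) ∧
        (∀ v : V, edgeSum x (cutE G {v}) = 1) ∧ edgeSum x (cutE G X) = 1} ∧
    ∀ F, IsFaceOf (faceCut G X) F → polyDim F = polyDim (faceCut G X) - 1 →
      ∃ e ∈ G.edgeSet, F = {x ∈ faceCut G X | x e = 0} := by
  have part1 : faceCut G X =
      {x | (∀ e, 0 ≤ x e) ∧ (∀ e : Sym2 V, e ∉ G.edgeSet → x e = 0) ∧
        (∀ v : V, edgeSum x (cutE G {v}) = 1) ∧ edgeSum x (cutE G X) = 1} := by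
    apply Set.Subset.antisymm faceCut_subset
    rintro x ⟨h0, hs, hd, hcut⟩
    exact mem_faceCut_of hBvN1 hBvN2 h0 hs hd hcut
  refine ⟨part1, ?_⟩
  intro F hF hdim
  set Q := faceCut G X with hQdef
  have hQsub : ∀ w ∈ Q, (∀ e, 0 ≤ w e) ∧ (∀ e : Sym2 V, e ∉ G.edgeSet → w e = 0) ∧
      (∀ v : V, edgeSum w (cutE G {v}) = 1) ∧ edgeSum w (cutE G X) = 1 := by
    intro w hw
    rw [part1] at hw
    exact hw
  have hQmem : ∀ w : Sym2 V → ℝ, (∀ e, 0 ≤ w e) → (∀ e : Sym2 V, e ∉ G.edgeSet → w e = 0) →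
      (∀ v : V, edgeSum w (cutE G {v}) = 1) → edgeSum w (cutE G X) = 1 → w ∈ Q := by
    intro w a b c d
    rw [part1]
    exact ⟨a, b, c, d⟩
  have hQconv : Convex ℝ Q := by
    rintro p ⟨hp, hpc⟩ q ⟨hq, hqc⟩ a b ha hb hab
    refine ⟨convex_convexHull ℝ _ hp hq ha hb hab, ?_⟩
    rw [edgeSum_comb, hpc, hqc, mul_one, mul_one, hab]
  have polyDim_ne : ∀ S : Set (Sym2 V → ℝ), S ≠ ∅ →
      polyDim S = (Module.finrank ℝ (vectorSpan ℝ S) : ℤ) := fun S h => if_neg h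
  by_cases hFemp : F = ∅
  · -- Q is a single point
    have hd1 : polyDim Q = 0 := by
      have hdim' : (-1 : ℤ) = polyDim Q - 1 := by
        rw [← hdim, hFemp]
        simp [polyDim]
      omega
    have hQne : Q ≠ ∅ := by
      intro h
      rw [h] at hd1
      simp [polyDim] at hd1
    have hfr0 : Module.finrank ℝ (vectorSpan ℝ Q) = 0 := by
      rw [polyDim_ne Q hQne] at hd1
      exact_mod_cast hd1
    obtain ⟨p, hp⟩ := eq_singleton_of_finrank_zero (Set.nonempty_iff_ne_empty.2 hQne) hfr0
    have hpQ : p ∈ Q := by rw [hp]; exact Set.mem_singleton p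
    obtain ⟨h0, hs, hd', hc⟩ := hQsub p hpQ
    obtain ⟨e, heC, hpe⟩ := exists_pos_on_cut h0 hc
    refine ⟨e, cutE_subset_edgeSet heC, ?_⟩
    rw [hFemp]
    ext x
    simp only [Set.mem_empty_iff_false, Set.mem_setOf_eq, false_iff]
    rintro ⟨hxQ, hxe⟩
    rw [hp] at hxQ
    rw [Set.mem_singleton_iff.1 hxQ] at hxe
    linarith
  · have hFne : F.Nonempty := Set.nonempty_iff_ne_empty.2 hFemp
    have hQne : Q.Nonempty := hFne.mono hF.1
    have hfr : (Module.finrank ℝ (vectorSpan ℝ F) : ℤ)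
        = (Module.finrank ℝ (vectorSpan ℝ Q) : ℤ) - 1 := by
      rw [polyDim_ne F hFemp, polyDim_ne Q hQne.ne_empty] at hdim
      exact hdim
    obtain ⟨z, hzF, hzext⟩ := interior_point hF.2.1 hFne
    have hzQ : z ∈ Q := hF.1 hzF
    have hkey : ∃ e ∈ G.edgeSet, z e = 0 ∧ ∃ w ∈ Q, w e ≠ 0 := by
      by_contra hcon
      push_neg at hcon
      have hQF : Q ⊆ F := by
        intro w hw
        obtain ⟨hz0, hzs, hzd, hzc⟩ := hQsub z hzQ
        obtain ⟨hw0, hws, hwd, hwc⟩ := hQsub w hw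
        set D := Finset.univ.filter (fun e : Sym2 V => 0 < z e) with hD
        have hDne : D.Nonempty := by
          obtain ⟨e, heC, hepos⟩ := exists_pos_on_cut hz0 hzc
          exact ⟨e, Finset.mem_filter.2 ⟨Finset.mem_univ _, hepos⟩⟩
        set ε := D.inf' hDne (fun e => z e / (1 + |z e - w e|)) with hε
        have hε0 : 0 < ε := by
          rw [hε, Finset.lt_inf'_iff]
          intro e he
          exact div_pos (Finset.mem_filter.1 he).2 (by positivity)
        set u : Sym2 V → ℝ := (1 + ε) • z - ε • w with hu
        have hue : ∀ e, u e = (1 + ε) * z e - ε * w e := fun e => by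
          simp [hu, mul_comm]
        have hu0 : ∀ e, 0 ≤ u e := by
          intro e
          rw [hue e]
          by_cases hz : 0 < z e
          · have heD : e ∈ D := Finset.mem_filter.2 ⟨Finset.mem_univ _, hz⟩
            have hεle : ε ≤ z e / (1 + |z e - w e|) := by
              rw [hε]
              exact Finset.inf'_le _ heD
            have habs : ε * |z e - w e| ≤ z e := by
              calc ε * |z e - w e| ≤ (z e / (1 + |z e - w e|)) * |z e - w e| :=
                    mul_le_mul_of_nonneg_right hεle (abs_nonneg _)
                _ ≤ z e := by
                    rw [div_mul_eq_mul_div, div_le_iff₀ (by positivity)]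
                    nlinarith [abs_nonneg (z e - w e)]
            have hlow : -(ε * |z e - w e|) ≤ ε * (z e - w e) := by
              nlinarith [neg_abs_le (z e - w e)]
            nlinarith
          · have hz0' : z e = 0 := le_antisymm (not_lt.1 hz) (hz0 e)
            have hw0' : w e = 0 := by
              by_cases hGe : e ∈ G.edgeSet
              · exact hcon e hGe hz0' w hw
              · exact hws e hGe
            rw [hz0', hw0']
            norm_num
        have humem : u ∈ Q := by
          have hform : u = (1 + ε) • z + (-ε) • w := by
            rw [hu, sub_eq_add_neg, neg_smul]
          refine hQmem u hu0 ?_ ?_ ?_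
          · intro e he
            rw [hue e, hzs e he, hws e he]
            ring
          · intro v
            rw [hform, edgeSum_comb, hzd v, hwd v]
            ring
          · rw [hform, edgeSum_comb, hzc, hwc]
            ring
        have hcomb : z = (1/(1+ε)) • u + (1 - 1/(1+ε)) • w := by
          funext e
          simp only [Pi.add_apply, Pi.smul_apply, smul_eq_mul]
          rw [hue e]
          have hne1 : (1:ℝ) + ε ≠ 0 := by positivity
          field_simp
          try ring
        have hmemF : (1/(1+ε)) • u + (1 - 1/(1+ε)) • w ∈ F := by
          rw [← hcomb]
          exact hzF
        exact (hF.2.2 u humem w hw (1/(1+ε)) (by positivity)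
          (by rw [div_lt_one (by linarith)]; linarith) hmemF).2
      have hFQ : F = Q := Set.Subset.antisymm hF.1 hQF
      rw [hFQ] at hdim
      omega
    obtain ⟨e, heE, hze, w, hwQ, hwe⟩ := hkey
    refine ⟨e, heE, ?_⟩
    set Fe := {x ∈ Q | x e = 0} with hFedef
    have hFsubFe : F ⊆ Fe := by
      intro y hyF
      refine ⟨hF.1 hyF, ?_⟩
      obtain ⟨u, huF, t, ht0, ht1, hcomb⟩ := hzext y (subset_affineSpan ℝ F hyF)
      have hu0 := ((hQsub u (hF.1 huF)).1) e
      have hy0 := ((hQsub y (hF.1 hyF)).1) e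
      have hsum0 : t * u e + (1 - t) * y e = 0 := by
        have := congrFun hcomb e
        simp only [Pi.add_apply, Pi.smul_apply, smul_eq_mul] at this
        rw [hze] at this
        linarith
      have h1 : 0 ≤ t * u e := mul_nonneg ht0.le hu0
      have h2 : 0 ≤ (1-t) * y e := mul_nonneg (by linarith) hy0
      have h3 : (1-t) * y e = 0 := by linarith
      rcases mul_eq_zero.1 h3 with h | h
      · linarith
      · exact h
    have hFeconv : Convex ℝ Fe := by
      rintro p ⟨hpQ, hpe⟩ q ⟨hqQ, hqe⟩ a b ha hb hab
      refine ⟨hQconv hpQ hqQ ha hb hab, ?_⟩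
      simp only [Pi.add_apply, Pi.smul_apply, smul_eq_mul, hpe, hqe]
      ring
    have hFeface : ∀ p ∈ Q, ∀ q ∈ Q, ∀ t : ℝ, 0 < t → t < 1 →
        t • p + (1 - t) • q ∈ Fe → p ∈ Fe ∧ q ∈ Fe := by
      rintro p hp q hq t ht0 ht1 ⟨-, hme⟩
      have hp0 := (hQsub p hp).1 e
      have hq0 := (hQsub q hq).1 e
      have hsum0 : t * p e + (1 - t) * q e = 0 := by
        simpa [mul_comm] using hme
      have h1 : 0 ≤ t * p e := mul_nonneg ht0.le hp0
      have h2 : 0 ≤ (1-t) * q e := mul_nonneg (by linarith) hq0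
      constructor
      · refine ⟨hp, ?_⟩
        have h3 : t * p e = 0 := by linarith
        rcases mul_eq_zero.1 h3 with h | h
        · linarith
        · exact h
      · refine ⟨hq, ?_⟩
        have h3 : (1-t) * q e = 0 := by linarith
        rcases mul_eq_zero.1 h3 with h | h
        · linarith
        · exact h
    have hzFe : z ∈ Fe := ⟨hzQ, hze⟩
    have hFene : Fe.Nonempty := ⟨z, hzFe⟩
    have hFesubQ : Fe ⊆ Q := fun x hx => hx.1
    have hVle : vectorSpan ℝ Fe ≤ vectorSpan ℝ Q := vectorSpan_mono ℝ hFesubQ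
    have hne2 : Module.finrank ℝ (vectorSpan ℝ Fe) ≠ Module.finrank ℝ (vectorSpan ℝ Q) := by
      intro heq
      have hVeq : vectorSpan ℝ Fe = vectorSpan ℝ Q :=
        Submodule.eq_of_le_of_finrank_le hVle heq.ge
      have hAeq : affineSpan ℝ Fe = affineSpan ℝ Q := by
        apply AffineSubspace.ext_of_direction_eq
        · rw [direction_affineSpan, direction_affineSpan, hVeq]
        · exact ⟨z, Set.mem_inter (subset_affineSpan ℝ Fe hzFe) (subset_affineSpan ℝ Q hzQ)⟩
      obtain ⟨z', hz'Fe, hz'ext⟩ := interior_point hFeconv hFene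
      obtain ⟨u, huFe, t, ht0, ht1, hcomb⟩ := hz'ext w
        (by rw [hAeq]; exact subset_affineSpan ℝ Q hwQ)
      have hmemFe : t • u + (1 - t) • w ∈ Fe := by rw [← hcomb]; exact hz'Fe
      exact hwe (hFeface u (hFesubQ huFe) w hwQ t ht0 ht1 hmemFe).2.2
    have hle2 : Module.finrank ℝ (vectorSpan ℝ Fe) ≤ Module.finrank ℝ (vectorSpan ℝ Q) :=
      Submodule.finrank_mono hVle
    have hFleFe : vectorSpan ℝ F ≤ vectorSpan ℝ Fe := vectorSpan_mono ℝ hFsubFe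
    have h1 : Module.finrank ℝ (vectorSpan ℝ F) ≤ Module.finrank ℝ (vectorSpan ℝ Fe) :=
      Submodule.finrank_mono hFleFe
    have hfeq : Module.finrank ℝ (vectorSpan ℝ Fe) ≤ Module.finrank ℝ (vectorSpan ℝ F) := by
      omega
    have hVeq2 : vectorSpan ℝ F = vectorSpan ℝ Fe :=
      Submodule.eq_of_le_of_finrank_le hFleFe hfeq
    have hAeq2 : affineSpan ℝ F = affineSpan ℝ Fe := by
      apply AffineSubspace.ext_of_direction_eq
      · rw [direction_affineSpan, direction_affineSpan, hVeq2]
      · exact ⟨z, Set.mem_inter (subset_affineSpan ℝ F hzF) (subset_affineSpan ℝ Fe hzFe)⟩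
    apply Set.Subset.antisymm hFsubFe
    intro y hyFe
    obtain ⟨u, huF, t, ht0, ht1, hcomb⟩ := hzext y
      (by rw [hAeq2]; exact subset_affineSpan ℝ Fe hyFe)
    have hmemF : t • u + (1 - t) • y ∈ F := by rw [← hcomb]; exact hzF
    exact (hF.2.2 u (hF.1 huF) y (hFesubQ hyFe) t ht0 ht1 hmemF).2

end PaperPM
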